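/- Let (x_n)_{n∈I} be a frame, (z_n)_{n∈I} a dual frame, and E = {1,...,k} ⊊ I satisfying the MRC. Suppose the iterative sequences α_n^j = ⟨v_n^{j−1}, x_j⟩/(1 − ⟨v_j^{j−1}, x_j⟩), v_n^j = v_n^{j−1} + α_n^j v_j^{j−1} (with v_n⁰ = z_n) are well defined for j = 1,...,k. Then the operator I − Σ_{i=1}^k θ_{z_i, x_i} is invertible on H, and v_n = (I − Σ_{i=1}^k θ_{z_i, x_i})⁻¹ z_n, n ∈ E^c, is a dual frame of (x_n)_{n∈E^c}. -/

import Mathlib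

set_option maxHeartbeats 1000000

noncomputable section

variable {H : Type*} [NormedAddCommGroup H] [InnerProductSpace ℂ H] [CompleteSpace H]

/-- `(x n)_{n ∈ I}` is a frame for `H` with frame bounds `A`, `B`. -/
def IsFrameOn (x : ℕ → H) (I : Set ℕ) (A B : ℝ) : Prop :=
  0 < A ∧ 0 < B ∧ ∀ h : H,
    Summable (fun n : I => ‖(inner ℂ (x n) h : ℂ)‖ ^ 2) ∧
    A * ‖h‖ ^ 2 ≤ ∑' n : I, ‖(inner ℂ (x n) h : ℂ)‖ ^ 2 ∧
    ∑' n : I, ‖(inner ℂ (x n) h : ℂ)‖ ^ 2 ≤ B * ‖h‖ ^ 2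

/-- `(z n)_{n ∈ I}` is a dual frame of `(x n)_{n ∈ I}`. -/
def IsDualFrameOn (z x : ℕ → H) (I : Set ℕ) : Prop :=
  (∃ A B : ℝ, IsFrameOn z I A B) ∧
  ∀ h : H, HasSum (fun n : I => (inner ℂ (x n) h : ℂ) • z n) h

/-- The rank-one operator `θ_{y,x} : h ↦ ⟨h, x⟩ y`. -/
def rankOne (y x : H) : H →L[ℂ] H := (innerSL ℂ x).smulRight y

omit [CompleteSpace H] in
lemma rankOne_apply (y x : H) (h : H) : rankOne y x h = (inner ℂ x h : ℂ) • y := rfl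

/-- If the iterative procedure (starting from an arbitrary dual frame `z`) is well
defined through step `k`, then `T = I − Σ_{i=1}^k θ_{z i, x i}` is invertible and
`(T⁻¹ z n)_{n ∈ I \ E}` is a dual frame of `(x n)_{n ∈ I \ E}`, `E = {1,…,k}`. -/

theorem stmt11 (x z : ℕ → H) (I : Set ℕ) (A B : ℝ) (hx : IsFrameOn x I A B)
    (hz : IsDualFrameOn z x I) (k : ℕ)
    (hE : ((Finset.Icc 1 k : Finset ℕ) : Set ℕ) ⊂ I)
    (hMRC : Dense ((Submodule.span ℂ
      (x '' (I \ (Finset.Icc 1 k : Finset ℕ))) : Submodule ℂ H) : Set H))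
    (v : ℕ → ℕ → H) (hv0 : ∀ n, v 0 n = z n)
    (hden : ∀ j ∈ Finset.Icc 1 k, (inner ℂ (x j) (v (j - 1) j) : ℂ) ≠ 1)
    (hrec : ∀ j ∈ Finset.Icc 1 k, ∀ n ∈ I \ ((Finset.Icc 1 j : Finset ℕ) : Set ℕ),
      v j n = v (j - 1) n +
        ((inner ℂ (x j) (v (j - 1) n) : ℂ) / (1 - (inner ℂ (x j) (v (j - 1) j) : ℂ))) •
          v (j - 1) j) :
    ∃ Tinv : H →L[ℂ] H,
      Tinv.comp (ContinuousLinearMap.id ℂ H - ∑ i ∈ Finset.Icc 1 k, rankOne (z i) (x i)) =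
        ContinuousLinearMap.id ℂ H ∧
      (ContinuousLinearMap.id ℂ H - ∑ i ∈ Finset.Icc 1 k, rankOne (z i) (x i)).comp Tinv =
        ContinuousLinearMap.id ℂ H ∧
      IsDualFrameOn (fun n => Tinv (z n)) x (I \ ((Finset.Icc 1 k : Finset ℕ) : Set ℕ)) := by

  have main : ∀ j, j ≤ k → ∃ S : H →L[ℂ] H,
      S.comp (ContinuousLinearMap.id ℂ H - ∑ i ∈ Finset.Icc 1 j, rankOne (z i) (x i)) =
        ContinuousLinearMap.id ℂ H ∧
      (ContinuousLinearMap.id ℂ H - ∑ i ∈ Finset.Icc 1 j, rankOne (z i) (x i)).comp S =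
        ContinuousLinearMap.id ℂ H ∧
      ∀ n ∈ I \ ((Finset.Icc 1 j : Finset ℕ) : Set ℕ), S (z n) = v j n := by
    intro j
    induction j with
    | zero =>
        intro _
        refine ⟨ContinuousLinearMap.id ℂ H, by simp, by simp, ?_⟩
        intro n hn; simp [hv0]
    | succ j ih =>
        intro hjk
        obtain ⟨S, hS1, hS2, hSz⟩ := ih (Nat.le_of_succ_le hjk)
        set m := j + 1 with hm
        have hmk : m ∈ Finset.Icc 1 k := Finset.mem_Icc.mpr ⟨Nat.succ_le_succ (Nat.zero_le _), hjk⟩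
        have hmI : m ∈ I := hE.subset (by simpa using hmk)
        have hmnot : m ∉ ((Finset.Icc 1 j : Finset ℕ) : Set ℕ) := by
          simp [Finset.mem_Icc, hm]
        set u := S (z m) with hu
        have huv : u = v j m := hSz m ⟨hmI, hmnot⟩
        have hd : (inner ℂ (x m) u : ℂ) ≠ 1 := by
          have := hden m hmk
          rwa [show m - 1 = j from rfl, ← huv] at this
        set d := (inner ℂ (x m) u : ℂ) with hdd
        have h1d : (1 : ℂ) - d ≠ 0 := sub_ne_zero.mpr (Ne.symm hd)
        set c := ((1 : ℂ) - d)⁻¹ with hc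
        have hcd : c * (1 - d) = 1 := inv_mul_cancel₀ h1d
        set θ : H →L[ℂ] H := rankOne u (x m) with hθ
        have hθθ : ∀ w : H, θ (θ w) = d • θ w := by
          intro w
          simp only [hθ, rankOne_apply, inner_smul_right, hdd]
          rw [smul_comm, mul_smul]
        set P : H →L[ℂ] H := ContinuousLinearMap.id ℂ H + c • θ with hP
        set Q : H →L[ℂ] H := ContinuousLinearMap.id ℂ H - θ with hQ
        have hQP : Q.comp P = ContinuousLinearMap.id ℂ H := by
          ext w
          simp only [ContinuousLinearMap.comp_apply, hP, hQ, ContinuousLinearMap.add_apply,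
            ContinuousLinearMap.sub_apply, ContinuousLinearMap.id_apply,
            ContinuousLinearMap.smul_apply, map_add, map_smul, hθθ]
          linear_combination (norm := module) hcd • θ w
        have hPQ : P.comp Q = ContinuousLinearMap.id ℂ H := by
          ext w
          simp only [ContinuousLinearMap.comp_apply, hP, hQ, ContinuousLinearMap.add_apply,
            ContinuousLinearMap.sub_apply, ContinuousLinearMap.id_apply,
            ContinuousLinearMap.smul_apply, map_sub, map_smul, hθθ]
          linear_combination (norm := module) hcd • θ w
        set T : H →L[ℂ] H :=
          ContinuousLinearMap.id ℂ H - ∑ i ∈ Finset.Icc 1 j, rankOne (z i) (x i) with hT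
        have hTu : T u = z m := by
          have := congrArg (fun f : H →L[ℂ] H => f (z m)) hS2
          simpa [ContinuousLinearMap.comp_apply] using this
        have hTsucc :
            ContinuousLinearMap.id ℂ H - ∑ i ∈ Finset.Icc 1 m, rankOne (z i) (x i) =
              T.comp Q := by
          ext w
          rw [hm]
          have hTθ : T (θ w) = (inner ℂ (x m) w : ℂ) • z m := by
            simp only [hθ, rankOne_apply, map_smul, hTu]
          have hSth : (∑ i ∈ Finset.Icc 1 j, rankOne (z i) (x i)) (θ w)
              = θ w - (inner ℂ (x m) w : ℂ) • z m := by
            have h2 : (∑ i ∈ Finset.Icc 1 j, rankOne (z i) (x i)) (θ w) = θ w - T (θ w) := by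
              simp [hT, ContinuousLinearMap.sub_apply]
            rw [h2, hTθ]
          simp only [ContinuousLinearMap.sub_apply, ContinuousLinearMap.id_apply,
            ContinuousLinearMap.comp_apply]
          rw [Finset.sum_Icc_succ_top (show (1 : ℕ) ≤ j + 1 by omega)]
          simp only [ContinuousLinearMap.add_apply, hT, hQ, ContinuousLinearMap.sub_apply,
            ContinuousLinearMap.id_apply, map_sub, hSth]
          abel
        refine ⟨(P.comp S), ?_, ?_, ?_⟩
        · rw [hTsucc]
          calc (P.comp S).comp (T.comp Q) = P.comp ((S.comp T).comp Q) := by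
                rw [ContinuousLinearMap.comp_assoc, ContinuousLinearMap.comp_assoc]
            _ = P.comp Q := by rw [hS1]; simp
            _ = ContinuousLinearMap.id ℂ H := hPQ
        · rw [hTsucc]
          calc (T.comp Q).comp (P.comp S) = T.comp ((Q.comp P).comp S) := by
                rw [ContinuousLinearMap.comp_assoc, ContinuousLinearMap.comp_assoc]
            _ = T.comp S := by rw [hQP]; simp
            _ = ContinuousLinearMap.id ℂ H := hS2
        · intro n hn
          have hnj : n ∈ I \ ((Finset.Icc 1 j : Finset ℕ) : Set ℕ) := by
            refine ⟨hn.1, fun hmem => hn.2 ?_⟩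
            simp only [Finset.coe_Icc, Set.mem_Icc] at hmem ⊢
            exact ⟨hmem.1, hmem.2.trans (Nat.le_succ j)⟩
          have hSzn : S (z n) = v j n := hSz n hnj
          have hr := hrec m hmk n hn
          rw [show m - 1 = j from rfl] at hr
          have hxd : (inner ℂ (x m) (v j m) : ℂ) = d := by rw [hdd, huv]
          simp only [ContinuousLinearMap.comp_apply, hP, ContinuousLinearMap.add_apply,
            ContinuousLinearMap.id_apply, ContinuousLinearMap.smul_apply, hθ, rankOne_apply,
            hSzn]
          rw [hr, hxd, huv]
          congr 1
          rw [smul_smul, div_eq_mul_inv, hc, mul_comm]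
  obtain ⟨S, hS1, hS2, -⟩ := main k le_rfl
  refine ⟨S, hS1, hS2, ?_⟩
  set T : H →L[ℂ] H :=
    ContinuousLinearMap.id ℂ H - ∑ i ∈ Finset.Icc 1 k, rankOne (z i) (x i) with hT
  set J : Set ℕ := I \ ((Finset.Icc 1 k : Finset ℕ) : Set ℕ) with hJ
  have hsub : J ⊆ I := Set.diff_subset
  have hB : 0 < B := hx.2.1
  -- reconstruction
  have hrecon : ∀ h : H, HasSum (fun n : J => (inner ℂ (x n) h : ℂ) • S (z n)) h := by
    intro h
    set f : ℕ → H := fun n => (inner ℂ (x n) h : ℂ) • z n with hf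
    have h1 : HasSum (I.indicator f) h := hasSum_subtype_iff_indicator.mp (hz.2 h)
    have h2 : HasSum (((Finset.Icc 1 k : Finset ℕ) : Set ℕ).indicator f)
        (∑ i ∈ Finset.Icc 1 k, f i) := by
      have h3 : ∀ b ∉ Finset.Icc 1 k,
          ((Finset.Icc 1 k : Finset ℕ) : Set ℕ).indicator f b = 0 := fun b hb =>
        Set.indicator_of_notMem (by simpa using hb) f
      have h4 : HasSum _ _ := hasSum_sum_of_ne_finset_zero h3
      have h5 : ∑ i ∈ Finset.Icc 1 k, ((Finset.Icc 1 k : Finset ℕ) : Set ℕ).indicator f i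
          = ∑ i ∈ Finset.Icc 1 k, f i :=
        Finset.sum_congr rfl fun i hi => Set.indicator_of_mem (by simpa using hi) f
      rwa [h5] at h4
    have hJind : J.indicator f
        = I.indicator f - ((Finset.Icc 1 k : Finset ℕ) : Set ℕ).indicator f := by
      funext n
      by_cases hnE : n ∈ ((Finset.Icc 1 k : Finset ℕ) : Set ℕ)
      · have hnI : n ∈ I := hE.subset hnE
        have hnJ : n ∉ J := fun hc => hc.2 hnE
        rw [Pi.sub_apply, Set.indicator_of_notMem hnJ, Set.indicator_of_mem hnI,
          Set.indicator_of_mem hnE, sub_self]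
      · by_cases hnI : n ∈ I
        · have hnJ : n ∈ J := ⟨hnI, hnE⟩
          rw [Pi.sub_apply, Set.indicator_of_mem hnJ, Set.indicator_of_mem hnI,
            Set.indicator_of_notMem hnE, sub_zero]
        · have hnJ : n ∉ J := fun hc => hnI hc.1
          rw [Pi.sub_apply, Set.indicator_of_notMem hnJ, Set.indicator_of_notMem hnI,
            Set.indicator_of_notMem hnE, sub_zero]
    have h4 : HasSum (J.indicator f) (h - ∑ i ∈ Finset.Icc 1 k, f i) := by
      rw [hJind]; exact h1.sub h2
    have hTh : h - ∑ i ∈ Finset.Icc 1 k, f i = T h := by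
      simp [hT, ContinuousLinearMap.sub_apply, ContinuousLinearMap.sum_apply,
        rankOne_apply, hf]
    rw [hTh] at h4
    have h5 : HasSum (fun n : J => f n) (T h) := hasSum_subtype_iff_indicator.mpr h4
    have h6 := S.hasSum h5
    have hST : S (T h) = h := by
      have := congrArg (fun g : H →L[ℂ] H => g h) hS1
      simpa [ContinuousLinearMap.comp_apply] using this
    rw [hST] at h6
    simpa [hf, map_smul] using h6
  set Sd : H →L[ℂ] H := ContinuousLinearMap.adjoint S with hSd
  have hadj : ∀ (n : ℕ) (h : H), (inner ℂ (S (z n)) h : ℂ) = inner ℂ (z n) (Sd h) :=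
    fun n h => (ContinuousLinearMap.adjoint_inner_right S (z n) h).symm
  obtain ⟨Az, Bz, hAz, hBz, hzp⟩ := hz.1
  -- summability of the new system's coefficients
  have hsumJ : ∀ h : H, Summable (fun n : J => ‖(inner ℂ (S (z n)) h : ℂ)‖ ^ 2) := by
    intro h
    have hg : Summable (fun n : I => ‖(inner ℂ (z n) (Sd h) : ℂ)‖ ^ 2) := (hzp (Sd h)).1
    have := hg.comp_injective (Set.inclusion_injective hsub)
    have heq : (fun n : J => ‖(inner ℂ (S (z n)) h : ℂ)‖ ^ 2)
        = (fun n : I => ‖(inner ℂ (z n) (Sd h) : ℂ)‖ ^ 2) ∘ Set.inclusion hsub := by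
      funext n; simp [Function.comp, hadj]
    rwa [heq]
  -- upper bound
  have hupper : ∀ h : H, ∑' n : J, ‖(inner ℂ (S (z n)) h : ℂ)‖ ^ 2
      ≤ (Bz * (‖Sd‖ + 1) ^ 2) * ‖h‖ ^ 2 := by
    intro h
    have hg : Summable (fun n : I => ‖(inner ℂ (z n) (Sd h) : ℂ)‖ ^ 2) := (hzp (Sd h)).1
    have h1 : ∑' n : J, ‖(inner ℂ (S (z n)) h : ℂ)‖ ^ 2
        ≤ ∑' n : I, ‖(inner ℂ (z n) (Sd h) : ℂ)‖ ^ 2 := by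
      refine Summable.tsum_le_tsum_of_inj (Set.inclusion hsub) (Set.inclusion_injective hsub)
        (fun c _ => by positivity) (fun a => le_of_eq ?_) (hsumJ h) hg
      simp [hadj]
    have h2 : ∑' n : I, ‖(inner ℂ (z n) (Sd h) : ℂ)‖ ^ 2 ≤ Bz * ‖Sd h‖ ^ 2 := (hzp (Sd h)).2.2
    have h3 : ‖Sd h‖ ≤ ‖Sd‖ * ‖h‖ := Sd.le_opNorm h
    have h4 : Bz * ‖Sd h‖ ^ 2 ≤ Bz * ((‖Sd‖ + 1) ^ 2 * ‖h‖ ^ 2) := by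
      have h5 : ‖Sd h‖ ^ 2 ≤ (‖Sd‖ + 1) ^ 2 * ‖h‖ ^ 2 := by
        nlinarith [norm_nonneg (Sd h), norm_nonneg h, Sd.opNorm_nonneg]
      nlinarith [hBz.le]
    calc ∑' n : J, ‖(inner ℂ (S (z n)) h : ℂ)‖ ^ 2
        ≤ Bz * ‖Sd h‖ ^ 2 := h1.trans h2
      _ ≤ Bz * ((‖Sd‖ + 1) ^ 2 * ‖h‖ ^ 2) := h4
      _ = (Bz * (‖Sd‖ + 1) ^ 2) * ‖h‖ ^ 2 := by ring
  -- lower bound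
  have hlower : ∀ h : H, B⁻¹ * ‖h‖ ^ 2 ≤ ∑' n : J, ‖(inner ℂ (S (z n)) h : ℂ)‖ ^ 2 := by
    intro h
    set b : J → ℝ := fun n => ‖(inner ℂ (x n) h : ℂ)‖ with hb
    set c : J → ℝ := fun n => ‖(inner ℂ (S (z n)) h : ℂ)‖ with hcc
    have hb2 : Summable (fun n : J => b n ^ 2) := by
      have hg : Summable (fun n : I => ‖(inner ℂ (x n) h : ℂ)‖ ^ 2) := (hx.2.2 h).1
      have h6 := hg.comp_injective (Set.inclusion_injective hsub)
      have heq : (fun n : J => b n ^ 2)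
          = (fun n : I => ‖(inner ℂ (x n) h : ℂ)‖ ^ 2) ∘ Set.inclusion hsub := by
        funext n; simp [hb, Function.comp, Set.coe_inclusion]
      rwa [heq]
    have hc2 : Summable (fun n : J => c n ^ 2) := hsumJ h
    have hbc : Summable (fun n : J => b n * c n) := by
      refine Summable.of_nonneg_of_le (fun n => by positivity)
        (fun n => ?_) (hb2.add hc2)
      nlinarith [sq_nonneg (b n - c n), sq_nonneg (b n + c n)]
    have hb2sum : ∑' n : J, b n ^ 2 ≤ B * ‖h‖ ^ 2 := by
      have hg : Summable (fun n : I => ‖(inner ℂ (x n) h : ℂ)‖ ^ 2) := (hx.2.2 h).1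
      have h1 : ∑' n : J, b n ^ 2 ≤ ∑' n : I, ‖(inner ℂ (x n) h : ℂ)‖ ^ 2 :=
        by
          refine Summable.tsum_le_tsum_of_inj (Set.inclusion hsub) (Set.inclusion_injective hsub)
            (fun c _ => by positivity) (fun a => le_of_eq ?_) hb2 hg
          simp [hb, Set.coe_inclusion]
      exact h1.trans (hx.2.2 h).2.2
    -- ‖h‖² ≤ ∑ b c
    have hsum0 : HasSum (fun n : J => (inner ℂ (x n) h : ℂ) * (inner ℂ h (S (z n)) : ℂ))
        ((inner ℂ h h : ℂ)) := by
      have := (innerSL ℂ h).hasSum (hrecon h)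
      simpa [inner_smul_right] using this
    have hnorm_term : ∀ n : J, ‖(inner ℂ (x n) h : ℂ) * (inner ℂ h (S (z n)) : ℂ)‖ = b n * c n := by
      intro n
      rw [norm_mul, hb, hcc, norm_inner_symm h (S (z n))]
    have hbc' : Summable (fun n : J => ‖(inner ℂ (x n) h : ℂ) * (inner ℂ h (S (z n)) : ℂ)‖) := by
      exact hbc.congr fun n => (hnorm_term n).symm
    have hhsq : ‖h‖ ^ 2 ≤ ∑' n : J, b n * c n := by
      have e1 : (inner ℂ h h : ℂ) = ∑' n : J, (inner ℂ (x n) h : ℂ) * (inner ℂ h (S (z n)) : ℂ) :=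
        hsum0.tsum_eq.symm
      have e2 : ‖(inner ℂ h h : ℂ)‖ = ‖h‖ ^ 2 := by
        rw [inner_self_eq_norm_sq_to_K]; simp [Complex.norm_real]
      calc ‖h‖ ^ 2 = ‖(inner ℂ h h : ℂ)‖ := e2.symm
        _ = ‖∑' n : J, (inner ℂ (x n) h : ℂ) * (inner ℂ h (S (z n)) : ℂ)‖ := by rw [← e1]
        _ ≤ ∑' n : J, ‖(inner ℂ (x n) h : ℂ) * (inner ℂ h (S (z n)) : ℂ)‖ :=
            norm_tsum_le_tsum_norm hbc'
        _ = ∑' n : J, b n * c n := by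
            exact tsum_congr fun n => hnorm_term n
    -- AM-GM style estimate
    have hptwise : ∀ n : J, 2 * B * (b n * c n) ≤ b n ^ 2 + B ^ 2 * c n ^ 2 := by
      intro n; nlinarith [sq_nonneg (b n - B * c n)]
    have hABsum : 2 * B * (∑' n : J, b n * c n)
        ≤ (∑' n : J, b n ^ 2) + B ^ 2 * (∑' n : J, c n ^ 2) := by
      have e3 : 2 * B * (∑' n : J, b n * c n) = ∑' n : J, 2 * B * (b n * c n) :=
        (tsum_mul_left).symm
      have e4 : ∑' n : J, (b n ^ 2 + B ^ 2 * c n ^ 2)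
          = (∑' n : J, b n ^ 2) + B ^ 2 * (∑' n : J, c n ^ 2) := by
        rw [Summable.tsum_add hb2 (hc2.mul_left (B ^ 2)), tsum_mul_left]
      rw [e3, ← e4]
      exact Summable.tsum_le_tsum hptwise (hbc.mul_left (2 * B)) (hb2.add (hc2.mul_left (B ^ 2)))
    have hcs : 0 ≤ ∑' n : J, c n ^ 2 := tsum_nonneg fun n => sq_nonneg _
    have key : B * ‖h‖ ^ 2 ≤ B ^ 2 * (∑' n : J, c n ^ 2) := by nlinarith
    rw [inv_mul_le_iff₀ hB]  -- B⁻¹ * ‖h‖² ≤ Sc ↔ ‖h‖² ≤ B * Sc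
    nlinarith
  refine ⟨⟨B⁻¹, Bz * (‖Sd‖ + 1) ^ 2, ?_⟩, hrecon⟩
  refine ⟨by positivity, by positivity, fun h => ⟨hsumJ h, hlower h, hupper h⟩⟩

end
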